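/- A signed graph Σ is balanced if and only if the associated signed complete graph K^{D^max}(Σ) is balanced. -/

import Mathlib

open SimpleGraph Polynomial

variable {V : Type*}

/-- The sign of a walk: the product of the signs of its edges. -/
def walkSign {G : SimpleGraph V} (sg : V → V → ℤ) {u v : V} (p : G.Walk u v) : ℤ :=
  (p.darts.map fun d => sg d.toProd.1 d.toProd.2).prod

/-- `sigmaMax G sg u v`: the maximum sign over all shortest `u`–`v` paths. -/
noncomputable def sigmaMax (G : SimpleGraph V) (sg : V → V → ℤ) (u v : V) : ℤ := by
  classical
  exact if ∃ p : G.Walk u v, p.length = G.dist u v ∧ walkSign sg p = 1 then 1 else -1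

/-- `sigmaMin G sg u v`: the minimum sign over all shortest `u`–`v` paths. -/
noncomputable def sigmaMin (G : SimpleGraph V) (sg : V → V → ℤ) (u v : V) : ℤ := by
  classical
  exact if ∃ p : G.Walk u v, p.length = G.dist u v ∧ walkSign sg p = -1 then -1 else 1

/-- `u` and `v` are distance-compatible: all shortest `u`–`v` paths have the same sign. -/
def pairCompatible (G : SimpleGraph V) (sg : V → V → ℤ) (u v : V) : Prop :=
  ∀ p q : G.Walk u v, p.length = G.dist u v → q.length = G.dist u v →
    walkSign sg p = walkSign sg q

/-- The `n`-th power graph: `u ~ v` iff `u ≠ v` and `d(u,v) ≤ n`. -/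
def powerGraph (G : SimpleGraph V) (n : ℕ) : SimpleGraph V where
  Adj u v := u ≠ v ∧ G.dist u v ≤ n
  symm := by
    constructor
    intro u v h
    exact ⟨h.1.symm, by rw [SimpleGraph.dist_comm]; exact h.2⟩
  loopless := by
    constructor
    intro u h
    exact h.1 rfl

/-- A signed graph is balanced if every cycle has positive sign. -/
def SBalanced (G : SimpleGraph V) (sg : V → V → ℤ) : Prop :=
  ∀ ⦃u : V⦄ (p : G.Walk u u), p.IsCycle → walkSign sg p = 1

/-- 2-connectedness: at least 3 vertices and deleting any vertex leaves a connected graph. -/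
def TwoConnected [Fintype V] (G : SimpleGraph V) : Prop :=
  3 ≤ Fintype.card V ∧ ∀ v : V, ((⊤ : G.Subgraph).deleteVerts {v}).coe.Connected

/-- Signature of the associated signed complete graph `K^{D^max}(Σ)`:
edges of `G` keep their sign, non-adjacent pairs get `sigmaMax`. -/
noncomputable def kSigMax (G : SimpleGraph V) (sg : V → V → ℤ) (u v : V) : ℤ := by
  classical
  exact if G.Adj u v then sg u v else sigmaMax G sg u v

/-- Signature of the associated signed complete graph `K^{D^min}(Σ)`. -/
noncomputable def kSigMin (G : SimpleGraph V) (sg : V → V → ℤ) (u v : V) : ℤ := by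
  classical
  exact if G.Adj u v then sg u v else sigmaMin G sg u v

section Aux

variable {G : SimpleGraph V} (sg : V → V → ℤ)

lemma walkSign_nil {u : V} : walkSign sg (Walk.nil : G.Walk u u) = 1 := rfl

lemma walkSign_cons {u v w : V} (h : G.Adj u v) (p : G.Walk v w) :
    walkSign sg (Walk.cons h p) = sg u v * walkSign sg p := by
  simp [walkSign]

lemma walkSign_append {u v w : V} (p : G.Walk u v) (q : G.Walk v w) :
    walkSign sg (p.append q) = walkSign sg p * walkSign sg q := by
  simp [walkSign, Walk.darts_append]

lemma walkSign_of_length_zero {u v : V} (p : G.Walk u v) (h : p.length = 0) :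
    walkSign sg p = 1 := by
  have hd : p.darts = [] := List.eq_nil_of_length_eq_zero (by rw [Walk.length_darts, h])
  simp [walkSign, hd]

lemma walkSign_reverse (hsym : ∀ u v, sg u v = sg v u) {u v : V} (p : G.Walk u v) :
    walkSign sg p.reverse = walkSign sg p := by
  unfold walkSign
  rw [Walk.darts_reverse, List.map_reverse, List.prod_reverse, List.map_map]
  congr 1
  apply List.map_congr_left
  intro d _
  simp only [Function.comp_apply, Dart.symm_toProd, Prod.fst_swap, Prod.snd_swap]
  exact (hsym _ _).symm

lemma walkSign_rotate [DecidableEq V] {u x : V} (p : G.Walk u u) (h : x ∈ p.support) :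
    walkSign sg (p.rotate x h) = walkSign sg p := by
  unfold walkSign
  exact ((Walk.rotate_darts p x h).map _).perm.prod_eq

lemma walkSign_one_or_neg_one (hval : ∀ u v, G.Adj u v → sg u v = 1 ∨ sg u v = -1)
    {u v : V} (p : G.Walk u v) : walkSign sg p = 1 ∨ walkSign sg p = -1 := by
  induction p with
  | nil => left; rfl
  | cons h q ih =>
    rw [walkSign_cons]
    rcases hval _ _ h with h1 | h1 <;> rcases ih with h2 | h2 <;> simp [h1, h2]

/-- If a path starting at `u` and ending at `w ≠ u` contains the edge `s(u,w)`,
then it has length 1. -/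
lemma length_eq_one_of_start_edge_mem {u w : V} (r : G.Walk u w) (hr : r.IsPath)
    (hne : w ≠ u) (he : s(u, w) ∈ r.edges) : r.length = 1 := by
  cases r with
  | nil => simp at he
  | @cons _ x _ h₁ r' =>
    rw [Walk.edges_cons, List.mem_cons] at he
    rcases he with he | he
    · have hx : x = w := by
        rcases Sym2.eq_iff.mp he with ⟨_, h2⟩ | ⟨h2, h3⟩
        · exact h2.symm
        · exact absurd h3 hne
      subst hx
      have hnil : r' = Walk.nil := (Walk.isPath_iff_eq_nil (p := r')).mp hr.of_cons
      subst hnil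
      simp
    · exfalso
      have hu : u ∈ r'.support := Walk.fst_mem_support_of_mem_edges r' he
      have hnd := hr.support_nodup
      rw [Walk.support_cons, List.nodup_cons] at hnd
      exact hnd.1 hu

/-- In a balanced signed graph, every closed walk has sign `1`. -/
lemma closed_walkSign (hb : SBalanced G sg) (hsym : ∀ u v, sg u v = sg v u)
    (hval : ∀ u v, G.Adj u v → sg u v = 1 ∨ sg u v = -1) :
    ∀ (n : ℕ) {u : V} (p : G.Walk u u), p.length = n → walkSign sg p = 1 := by
  classical
  intro n
  induction n using Nat.strong_induction_on with
  | _ n ih =>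
  intro u p hlen
  by_cases hnd : p.support.tail.Nodup
  · -- all internal vertices distinct
    cases p with
    | nil => rfl
    | @cons _ w _ h q =>
      by_cases hq0 : q.length = 0
      · exact absurd (Walk.eq_of_length_eq_zero hq0) h.ne'
      by_cases hq1 : q.length = 1
      · -- closed walk of length 2
        cases q with
        | nil => simp at hq1
        | @cons _ w' _ h' r =>
          have hr0 : r.length = 0 := by
            rw [Walk.length_cons] at hq1; omega
          have hw' : w' = u := Walk.eq_of_length_eq_zero hr0
          rw [walkSign_cons, walkSign_cons, walkSign_of_length_zero sg r hr0,
            hw', hsym w u]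
          rcases hval u w h with h1 | h1 <;> rw [h1] <;> ring
      · -- length ≥ 3 : it is a cycle
        have hpq : q.IsPath := by
          rw [Walk.isPath_def]
          simpa using hnd
        have hedge : s(u, w) ∉ q.edges := by
          intro hmem
          have hrev : s(u, w) ∈ q.reverse.edges := by
            rw [Walk.edges_reverse, List.mem_reverse]; exact hmem
          have h1 := length_eq_one_of_start_edge_mem q.reverse hpq.reverse h.ne' hrev
          rw [Walk.length_reverse] at h1
          omega
        exact hb _ ((Walk.cons_isCycle_iff q h).mpr ⟨hpq, hedge⟩)
  · -- some internal vertex repeats: split into shorter closed walks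
    obtain ⟨x, hdup⟩ := List.exists_duplicate_iff_not_nodup.mpr hnd
    have hx2 : 2 ≤ p.support.tail.count x := List.duplicate_iff_two_le_count.mp hdup
    have hxs : x ∈ p.support :=
      List.mem_of_mem_tail hdup.mem
    have key : ∀ (p₂ : G.Walk x x), p₂.length = n → 2 ≤ p₂.support.tail.count x →
        walkSign sg p₂ = 1 := by
      intro p₂ hlen₂ hcnt₂
      cases p₂ with
      | nil => simp at hcnt₂
      | @cons _ w₂ _ h₂ q₂ =>
        have hcq : 2 ≤ q₂.support.count x := by
          simpa using hcnt₂
        have hxq : x ∈ q₂.support := by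
          rw [← List.count_pos_iff]; omega
        have hspec := q₂.take_spec hxq
        have hct : (q₂.takeUntil x hxq).support.count x = 1 :=
          q₂.count_support_takeUntil_eq_one hxq
        have hsupp : q₂.support =
            (q₂.takeUntil x hxq).support ++ (q₂.dropUntil x hxq).support.tail := by
          conv_lhs => rw [← hspec]
          rw [Walk.support_append]
        have hcd : 1 ≤ (q₂.dropUntil x hxq).support.tail.count x := by
          rw [hsupp, List.count_append, hct] at hcq
          omega
        have hdlen : 1 ≤ (q₂.dropUntil x hxq).length := by
          have h1 : (q₂.dropUntil x hxq).support.tail.length =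
              (q₂.dropUntil x hxq).length := by
            rw [List.length_tail, Walk.length_support]
            omega
          have h2 := List.count_le_length (a := x) (l := (q₂.dropUntil x hxq).support.tail)
          omega
        have hqlen : (q₂.takeUntil x hxq).length + (q₂.dropUntil x hxq).length
            = q₂.length := by
          conv_rhs => rw [← hspec]
          rw [Walk.length_append]
        have hn : n = q₂.length + 1 := by
          rw [← hlen₂, Walk.length_cons]
        -- the two shorter closed walks
        have hc1 : walkSign sg (Walk.cons h₂ (q₂.takeUntil x hxq)) = 1 := by
          apply ih (Walk.cons h₂ (q₂.takeUntil x hxq)).length _ _ rfl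
          rw [Walk.length_cons]
          omega
        have hc2 : walkSign sg (q₂.dropUntil x hxq) = 1 := by
          apply ih (q₂.dropUntil x hxq).length _ _ rfl
          omega
        have hq₂ : walkSign sg q₂ =
            walkSign sg (q₂.takeUntil x hxq) * walkSign sg (q₂.dropUntil x hxq) := by
          conv_lhs => rw [← hspec]
          rw [walkSign_append]
        rw [walkSign_cons] at hc1 ⊢
        rw [hq₂, ← mul_assoc, hc1, hc2, one_mul]
    rw [← walkSign_rotate sg p hxs]
    apply key _ _ _
    · have : (p.rotate x hxs).length + 0 = p.length := by
        have := congr_arg Walk.length (p.take_spec hxs)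
        rw [Walk.length_append] at this
        simp only [Walk.rotate, Walk.length_append]
        omega
      omega
    · rw [List.Perm.count_eq (Walk.support_rotate p x hxs).perm]
      exact hx2

/-- Walk signs are computed by a vertex potential. -/
lemma walkSign_potential (θ : V → ℤ) (hθ : ∀ v, θ v = 1 ∨ θ v = -1)
    (hpot : ∀ u v, G.Adj u v → sg u v = θ u * θ v) {u v : V} (p : G.Walk u v) :
    walkSign sg p = θ u * θ v := by
  induction p with
  | nil =>
    rename_i a
    rcases hθ a with h | h <;> rw [walkSign_nil, h] <;> ring
  | @cons a w b h q ih =>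
    rw [walkSign_cons, hpot _ _ h, ih]
    rcases hθ w with h' | h' <;> rw [h'] <;> ring

/-- Harary's potential for a balanced connected signed graph. -/
lemma exists_potential [Nonempty V] (hb : SBalanced G sg) (hc : G.Connected)
    (hsym : ∀ u v, sg u v = sg v u)
    (hval : ∀ u v, G.Adj u v → sg u v = 1 ∨ sg u v = -1) :
    ∃ θ : V → ℤ, (∀ v, θ v = 1 ∨ θ v = -1) ∧
      ∀ u v, G.Adj u v → sg u v = θ u * θ v := by
  classical
  obtain ⟨r⟩ := (inferInstance : Nonempty V)
  have hw : ∀ v : V, G.Walk r v := fun v => Classical.choice (hc.preconnected r v)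
  refine ⟨fun v => walkSign sg (hw v), fun v => walkSign_one_or_neg_one sg hval _, ?_⟩
  intro u v h
  set θ : V → ℤ := fun v => walkSign sg (hw v) with hθdef
  have hC : walkSign sg ((hw u).append (Walk.cons h (hw v).reverse)) = 1 :=
    closed_walkSign sg hb hsym hval _ _ rfl
  rw [walkSign_append, walkSign_cons, walkSign_reverse sg hsym] at hC
  -- hC : θ u * (sg u v * θ v) = 1
  have h2 : θ u * θ u = 1 := by
    rcases walkSign_one_or_neg_one sg hval (hw u) with h' | h' <;>
      simp only [hθdef] <;> rw [h'] <;> ring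
  have h3 : θ v * θ v = 1 := by
    rcases walkSign_one_or_neg_one sg hval (hw v) with h' | h' <;>
      simp only [hθdef] <;> rw [h'] <;> ring
  calc sg u v = (θ u * θ u) * sg u v * (θ v * θ v) := by rw [h2, h3]; ring
    _ = θ u * (θ u * (sg u v * θ v)) * θ v := by ring
    _ = θ u * θ v := by rw [hC]; ring

lemma walkSign_mapLe_top {u v : V} (p : G.Walk u v) :
    walkSign (kSigMax G sg) (p.mapLe (le_top : G ≤ ⊤)) = walkSign sg p := by
  induction p with
  | nil => rfl
  | @cons a b c h q ih =>
    rw [Walk.mapLe, Walk.map_cons]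
    simp only [Hom.ofLE_apply]
    rw [walkSign_cons, walkSign_cons]
    have : kSigMax G sg a b = sg a b := by
      unfold kSigMax
      simp [h]
    rw [this]
    exact congrArg _ ih

end Aux

theorem balanced_iff_assoc_complete_balanced {V : Type*} [Fintype V] (G : SimpleGraph V) (sg : V → V → ℤ)
    (hconn : G.Connected) (hsym : ∀ u v, sg u v = sg v u)
    (hval : ∀ u v, G.Adj u v → sg u v = 1 ∨ sg u v = -1) :
    SBalanced G sg ↔ SBalanced (⊤ : SimpleGraph V) (kSigMax G sg) := by
  classical
  constructor
  · intro hb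
    rcases isEmpty_or_nonempty V with hE | hNE
    · intro u _ _; exact (hE.false u).elim
    · obtain ⟨θ, hθ, hpot⟩ := exists_potential sg hb hconn hsym hval
      -- the complete-graph signature is also given by the potential
      have hk : ∀ u v : V, (⊤ : SimpleGraph V).Adj u v → kSigMax G sg u v = θ u * θ v := by
        intro u v huv
        rw [top_adj] at huv
        by_cases hadj : G.Adj u v
        · unfold kSigMax
          rw [if_pos hadj]
          exact hpot u v hadj
        · unfold kSigMax
          rw [if_neg hadj]
          unfold sigmaMax
          have hall : ∀ p : G.Walk u v, walkSign sg p = θ u * θ v := fun p =>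
            walkSign_potential sg θ hθ hpot p
          have hone : θ u * θ v = 1 ∨ θ u * θ v = -1 := by
            rcases hθ u with h1 | h1 <;> rcases hθ v with h2 | h2 <;>
              rw [h1, h2] <;> norm_num
          rcases hone with hone | hone
          · rw [if_pos, hone]
            obtain ⟨p, hp⟩ := hconn.exists_walk_length_eq_dist u v
            exact ⟨p, hp, by rw [hall p, hone]⟩
          · rw [if_neg, hone]
            rintro ⟨p, -, hps⟩
            rw [hall p, hone] at hps
            norm_num at hps
      intro u p hp
      have := walkSign_potential (G := (⊤ : SimpleGraph V)) (kSigMax G sg) θ hθ hk p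
      rw [this]
      rcases hθ u with h1 | h1 <;> rw [h1] <;> ring
  · intro hk u p hp
    have hp' : (p.mapLe (le_top : G ≤ ⊤)).IsCycle := hp.mapLe _
    have := hk _ hp'
    rwa [walkSign_mapLe_top] at this
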